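/- Let n ≥ 2 and let (E[k])_{k≥0} be a sequence of edge sets on vertex set {1, …, n} (directed edges, no self-loops). For each k define the n×n matrix P[k] by P[k]_{lj} = 1/(1 + D_j⁺[k]) if l = j or (l, j) ∈ E[k], and P[k]_{lj} = 0 otherwise, where D_j⁺[k] is the number of out-neighbors of j in E[k]. Suppose there exist an integer ℓ ≥ 1 and a strictly increasing sequence of times t₀ = 0 < t₁ < t₂ < … with t_{m+1} − t_m ≤ ℓ for all m, such that for every m the union digraph with edge set E[t_m] ∪ … ∪ E[t_{m+1} − 1] is strongly connected. Let τ̄ ∈ ℕ and let τ(k, j, i) ∈ {0, …, τ̄} be delay functions with τ(k, j, j) = 0. Let y and z both evolve by the time-varying delayed iteration x_j[k+1] = Σ_{i=1}^n Σ_{s=0}^{k} [s + τ(s, j, i) = k] · P[s]_{ji} · x_i[s], with y[0] = y₀ ∈ ℝⁿ and z[0] = 𝟙. Then z_j[k] > 0 for all j and k, and for every j, y_j[k] / z_j[k] converges as k → ∞ to (Σ_{l=1}^n y₀(l)) / n. -/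

import Mathlib

open Matrix Filter

/-- The out-degree of node `j`: the number of edges `(l, j)` (from `j` to `l`) in `E`. -/
def outDeg {n : ℕ} (E : Finset (Fin n × Fin n)) (j : Fin n) : ℕ :=
  (E.filter fun e => e.2 = j).card

/-- The weight matrix associated with edge set `E`: node `j` puts weight
`1/(1 + D_j⁺)` on its self-link and on each outgoing link `(l, j)`; zero otherwise. -/
noncomputable def degWeights {n : ℕ} (E : Finset (Fin n × Fin n)) : Matrix (Fin n) (Fin n) ℝ :=
  fun l j => if l = j ∨ (l, j) ∈ E then 1 / (1 + (outDeg E j : ℝ)) else 0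

/-- The digraph with edge set `F` (an edge `(l, j)` points from `j` to `l`) is strongly
connected: for every ordered pair of distinct vertices there is a directed path. -/
def StronglyConnected {n : ℕ} (F : Finset (Fin n × Fin n)) : Prop :=
  ∀ i j : Fin n, i ≠ j → Relation.TransGen (fun a b => (b, a) ∈ F) i j

/-- The time-varying delayed iteration driven by matrices `P[s]` and delays `τ`:
`x_j[k+1] = Σ_i Σ_{s=0}^{k} [s + τ(s,j,i) = k] ⬝ P[s]_{ji} ⬝ x_i[s]`. -/
def DelayedIterTV {n : ℕ} (P : ℕ → Matrix (Fin n) (Fin n) ℝ)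
    (τ : ℕ → Fin n → Fin n → ℕ) (x : ℕ → Fin n → ℝ) : Prop :=
  ∀ k j, x (k + 1) j =
    ∑ i, ∑ s ∈ Finset.range (k + 1), if s + τ s j i = k then P s j i * x s i else 0

namespace Hidden

namespace PS0

variable {n : ℕ}

lemma degW_nonneg (E : Finset (Fin n × Fin n)) (l j : Fin n) : 0 ≤ degWeights E l j := by
  unfold degWeights
  split_ifs with h
  · positivity
  · exact le_refl _

lemma degW_diag_pos (E : Finset (Fin n × Fin n)) (j : Fin n) : 0 < degWeights E j j := by
  unfold degWeights
  rw [if_pos (Or.inl rfl)]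
  positivity

lemma degW_pos_of_mem {E : Finset (Fin n × Fin n)} {l j : Fin n} (h : (l, j) ∈ E) :
    0 < degWeights E l j := by
  unfold degWeights
  rw [if_pos (Or.inr h)]
  positivity

lemma outDeg_card (E : Finset (Fin n × Fin n)) (hE : ∀ e ∈ E, e.1 ≠ e.2) (j : Fin n) :
    (Finset.univ.filter (fun l => l = j ∨ (l, j) ∈ E)).card = outDeg E j + 1 := by
  classical
  have himg : (Finset.univ.filter (fun l => l = j ∨ (l, j) ∈ E))
      = insert j ((E.filter fun e => e.2 = j).image Prod.fst) := by
    ext l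
    simp only [Finset.mem_filter, Finset.mem_univ, true_and, Finset.mem_insert,
      Finset.mem_image]
    constructor
    · rintro (rfl | h)
      · exact Or.inl rfl
      · exact Or.inr ⟨(l, j), by simp [h], rfl⟩
    · rintro (rfl | ⟨e, he, rfl⟩)
      · exact Or.inl rfl
      · right
        obtain ⟨he1, he2⟩ := he
        have : e = (e.1, j) := by rw [← he2]
        rw [this] at he1
        exact he1
  rw [himg]
  rw [Finset.card_insert_of_notMem, Finset.card_image_of_injOn]
  · rfl
  · intro e he e' he' hf
    simp only [Finset.coe_filter, Set.mem_setOf_eq] at he he'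
    exact Prod.ext hf (he.2.trans he'.2.symm)
  · intro hj
    simp only [Finset.mem_image, Finset.mem_filter] at hj
    obtain ⟨e, ⟨he, h2⟩, h1⟩ := hj
    exact hE e he (h1.trans h2.symm)

lemma outDeg_lt (E : Finset (Fin n × Fin n)) (hE : ∀ e ∈ E, e.1 ≠ e.2) (j : Fin n) :
    outDeg E j + 1 ≤ n := by
  rw [← outDeg_card E hE j]
  simpa using Finset.card_le_univ (Finset.univ.filter (fun l => l = j ∨ (l, j) ∈ E))

lemma degW_colsum (E : Finset (Fin n × Fin n)) (hE : ∀ e ∈ E, e.1 ≠ e.2) (j : Fin n) :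
    ∑ l, degWeights E l j = 1 := by
  classical
  unfold degWeights
  rw [Finset.sum_ite, Finset.sum_const, Finset.sum_const_zero, add_zero,
    outDeg_card E hE j]
  have : (0:ℝ) < 1 + (outDeg E j : ℝ) := by positivity
  rw [nsmul_eq_mul, Nat.cast_add, Nat.cast_one, add_comm (outDeg E j : ℝ) 1, mul_one_div,
    div_self (ne_of_gt this)]

lemma degW_ge {E : Finset (Fin n × Fin n)} (hE : ∀ e ∈ E, e.1 ≠ e.2) {l j : Fin n}
    (h : 0 < degWeights E l j) : 1 / (n : ℝ) ≤ degWeights E l j := by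
  have hcard := outDeg_lt E hE j
  unfold degWeights at h ⊢
  split_ifs with hc
  · apply one_div_le_one_div_of_le
    · positivity
    · have : ((outDeg E j : ℕ) : ℝ) + 1 ≤ (n : ℝ) := by exact_mod_cast hcard
      linarith
  · rw [if_neg hc] at h
    exact absurd h (lt_irrefl 0)

end PS0

open PS0



namespace PS

variable {n : ℕ}
variable (τbar : ℕ) (E : ℕ → Finset (Fin n × Fin n)) (τ : ℕ → Fin n → Fin n → ℕ)

/-- augmented index type -/
abbrev Aug (n τbar : ℕ) := Fin n × Fin (τbar + 1)

noncomputable def Amat (k : ℕ) : Matrix (Aug n τbar) (Aug n τbar) ℝ :=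
  fun p q =>
    if q.2.val = 0 then (if τ k p.1 q.1 = p.2.val then degWeights (E k) p.1 q.1 else 0)
    else if q.1 = p.1 ∧ q.2.val = p.2.val + 1 then 1 else 0

noncomputable def Wmat (k : ℕ) : ℕ → Matrix (Aug n τbar) (Aug n τbar) ℝ
  | 0 => 1
  | (m + 1) => Amat τbar E τ (k + m) * Wmat k m

/-- messages in flight towards j, arriving at depth v -/
noncomputable def Buf (x : ℕ → Fin n → ℝ) (j : Fin n) (k v : ℕ) : ℝ :=
  ∑ i, ∑ s ∈ Finset.range k,
    if s + τ s j i + 1 = k + v then degWeights (E s) j i * x s i else 0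

noncomputable def Xaug (x : ℕ → Fin n → ℝ) (k : ℕ) : Aug n τbar → ℝ :=
  fun p => if p.2.val = 0 then x k p.1 else Buf E τ x p.1 k p.2.val

lemma Buf_succ (x : ℕ → Fin n → ℝ) (j : Fin n) (k v : ℕ) :
    Buf E τ x j (k + 1) v =
      (∑ i, if τ k j i = v then degWeights (E k) j i * x k i else 0) + Buf E τ x j k (v + 1) := by
  unfold Buf
  rw [← Finset.sum_add_distrib]
  refine Finset.sum_congr rfl fun i _ => ?_
  rw [Finset.sum_range_succ]
  rw [add_comm]
  congr 1
  · refine if_congr ?_ rfl rfl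
    omega
  · refine Finset.sum_congr rfl fun s _ => ?_
    refine if_congr ?_ rfl rfl
    omega

lemma Buf_zero (x : ℕ → Fin n → ℝ) (hx : DelayedIterTV (fun k => degWeights (E k)) τ x)
    (j : Fin n) (k : ℕ) : x (k + 1) j = Buf E τ x j (k + 1) 0 := by
  rw [hx k j]
  unfold Buf
  refine Finset.sum_congr rfl fun i _ => Finset.sum_congr rfl fun s _ => ?_
  refine if_congr ?_ rfl rfl
  omega

lemma Buf_top (hτle : ∀ k j i, τ k j i ≤ τbar) (x : ℕ → Fin n → ℝ) (j : Fin n) (k : ℕ) :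
    Buf E τ x j k (τbar + 1) = 0 := by
  unfold Buf
  refine Finset.sum_eq_zero fun i _ => Finset.sum_eq_zero fun s hs => ?_
  rw [if_neg]
  have := hτle s j i
  have := Finset.mem_range.mp hs
  omega

lemma Xaug_step (hτle : ∀ k j i, τ k j i ≤ τbar) (x : ℕ → Fin n → ℝ)
    (hx : DelayedIterTV (fun k => degWeights (E k)) τ x) (k : ℕ) :
    Xaug τbar E τ x (k + 1) = Amat τbar E τ k *ᵥ Xaug τbar E τ x k := by
  funext p
  obtain ⟨j, d⟩ := p
  have hrhs : (Amat τbar E τ k *ᵥ Xaug τbar E τ x k) (j, d) =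
      (∑ i, if τ k j i = d.val then degWeights (E k) j i * x k i else 0)
      + ∑ e : Fin τbar, if e.val = d.val then Buf E τ x j k (e.val + 1) else 0 := by
    rw [Matrix.mulVec]
    show ∑ q : Aug n τbar, Amat τbar E τ k (j, d) q * Xaug τbar E τ x k q = _
    rw [Fintype.sum_prod_type]
    have hsplit : ∀ i : Fin n, (∑ e : Fin (τbar + 1),
        Amat τbar E τ k (j, d) (i, e) * Xaug τbar E τ x k (i, e)) =
        (if τ k j i = d.val then degWeights (E k) j i * x k i else 0)
        + ∑ e : Fin τbar, (if i = j ∧ e.val = d.val then 1 else 0) * Buf E τ x j k (e.val + 1) := by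
      intro i
      rw [Fin.sum_univ_succ]
      congr 1
      · have h0 : ((0 : Fin (τbar + 1)) : ℕ) = 0 := rfl
        show (if ((0:Fin (τbar+1)):ℕ) = 0 then (if τ k j i = d.val then degWeights (E k) j i else 0)
            else if i = j ∧ ((0:Fin (τbar+1)):ℕ) = d.val + 1 then (1:ℝ) else 0) *
            (if ((0:Fin (τbar+1)):ℕ) = 0 then x k i else Buf E τ x i k ((0:Fin (τbar+1)):ℕ)) = _
        rw [if_pos h0, if_pos h0]
        split_ifs <;> ring
      · refine Finset.sum_congr rfl fun e _ => ?_
        show (if (e.succ).val = 0 then (if τ k j i = d.val then degWeights (E k) j i else 0)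
            else if i = j ∧ (e.succ).val = d.val + 1 then (1:ℝ) else 0) *
            (if (e.succ).val = 0 then x k i else Buf E τ x i k (e.succ).val) = _
        have hne : ¬ ((e.succ : Fin (τbar+1)).val = 0) := by simp [Fin.val_succ]
        rw [if_neg hne, if_neg hne]
        simp only [Fin.val_succ]
        by_cases hc : i = j ∧ e.val = d.val
        · obtain ⟨rfl, he⟩ := hc
          simp [he]
        · have h1 : ¬(i = j ∧ e.val + 1 = d.val + 1) := fun h => hc ⟨h.1, by omega⟩
          rw [if_neg h1, if_neg hc, zero_mul, zero_mul]
    rw [Finset.sum_congr rfl fun i _ => hsplit i]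
    rw [Finset.sum_add_distrib]
    congr 1
    rw [Finset.sum_comm]
    refine Finset.sum_congr rfl fun e _ => ?_
    by_cases he : e.val = d.val
    · rw [if_pos he, Finset.sum_eq_single j]
      · rw [if_pos ⟨rfl, he⟩, one_mul]
      · intro b _ hb
        rw [if_neg (fun h => hb h.1), zero_mul]
      · intro h
        exact absurd (Finset.mem_univ j) h
    · rw [if_neg he]
      refine Finset.sum_eq_zero fun i _ => ?_
      rw [if_neg (fun h => he h.2), zero_mul]
  rw [hrhs]
  have hsum2 : (∑ e : Fin τbar, if e.val = d.val then Buf E τ x j k (e.val + 1) else 0)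
      = Buf E τ x j k (d.val + 1) := by
    by_cases hd : d.val < τbar
    · rw [Finset.sum_eq_single (⟨d.val, hd⟩ : Fin τbar)]
      · rw [if_pos rfl]
      · intro e _ he
        rw [if_neg (fun hh => he (Fin.ext hh))]
      · intro h
        exact absurd (Finset.mem_univ _) h
    · have hdt : d.val = τbar := by omega
      rw [hdt, Buf_top τbar E τ hτle]
      refine Finset.sum_eq_zero fun e _ => ?_
      rw [if_neg (by omega)]
  rw [hsum2]
  show Xaug τbar E τ x (k+1) (j, d) = _
  unfold Xaug
  by_cases hd0 : d.val = 0
  · rw [if_pos hd0]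
    rw [Buf_zero E τ x hx j k]
    rw [Buf_succ]
    rw [hd0]
  · rw [if_neg hd0]
    obtain ⟨v, hv⟩ : ∃ v, d.val = v + 1 := ⟨d.val - 1, by omega⟩
    rw [hv, Buf_succ]

lemma Xaug_iter (hτle : ∀ k j i, τ k j i ≤ τbar) (x : ℕ → Fin n → ℝ)
    (hx : DelayedIterTV (fun k => degWeights (E k)) τ x) (k m : ℕ) :
    Xaug τbar E τ x (k + m) = Wmat τbar E τ k m *ᵥ Xaug τbar E τ x k := by
  induction m with
  | zero => rw [Wmat]; simp
  | succ m ih =>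
      have : k + (m + 1) = (k + m) + 1 := rfl
      rw [this, Xaug_step τbar E τ hτle x hx (k + m), ih, Wmat, ← Matrix.mulVec_mulVec]

lemma Amat_nonneg (k : ℕ) (p q : Aug n τbar) : 0 ≤ Amat τbar E τ k p q := by
  unfold Amat
  split_ifs
  · exact degW_nonneg _ _ _
  · exact le_refl 0
  · exact zero_le_one
  · exact le_refl 0

lemma Amat_colsum (hnoself : ∀ k, ∀ e ∈ E k, e.1 ≠ e.2) (hτle : ∀ k j i, τ k j i ≤ τbar)
    (k : ℕ) (q : Aug n τbar) : ∑ p, Amat τbar E τ k p q = 1 := by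
  classical
  by_cases hq : q.2.val = 0
  · have : ∀ j : Fin n, (∑ d : Fin (τbar + 1), Amat τbar E τ k (j, d) q)
        = degWeights (E k) j q.1 := by
      intro j
      have h1 : ∀ d : Fin (τbar + 1), Amat τbar E τ k (j, d) q
          = if τ k j q.1 = d.val then degWeights (E k) j q.1 else 0 := by
        intro d
        unfold Amat
        rw [if_pos hq]
      rw [Finset.sum_congr rfl fun d _ => h1 d]
      rw [Finset.sum_eq_single (⟨τ k j q.1, Nat.lt_succ_of_le (hτle k j q.1)⟩ : Fin (τbar + 1))]
      · exact if_pos rfl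
      · intro d _ hd
        exact if_neg (fun hh => hd (Fin.ext hh.symm))
      · intro h
        exact absurd (Finset.mem_univ _) h
    rw [Fintype.sum_prod_type, Finset.sum_congr rfl fun j _ => this j]
    exact degW_colsum (E k) (hnoself k) q.1
  · obtain ⟨v, hv⟩ : ∃ v, q.2.val = v + 1 := ⟨q.2.val - 1, by omega⟩
    have hvlt : v < τbar + 1 := by have := q.2.isLt; omega
    have h1 : ∀ (j : Fin n) (d : Fin (τbar + 1)), Amat τbar E τ k (j, d) q
        = if (j, d) = (q.1, (⟨v, hvlt⟩ : Fin (τbar + 1))) then 1 else 0 := by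
      intro j d
      unfold Amat
      rw [if_neg hq]
      refine if_congr ?_ rfl rfl
      constructor
      · rintro ⟨rfl, h2⟩
        have h2' : (q.2 : ℕ) = (d : ℕ) + 1 := h2
        have hdv : (d : ℕ) = v := by omega
        have : d = (⟨v, hvlt⟩ : Fin (τbar + 1)) := Fin.ext (by simp [hdv])
        rw [this]
      · rintro h
        have h1' : j = q.1 := congrArg Prod.fst h
        have h2' : d = (⟨v, hvlt⟩ : Fin (τbar + 1)) := congrArg Prod.snd h
        subst h1' h2'
        exact ⟨rfl, by simp [hv]⟩
    have h1' : ∀ p : Aug n τbar, Amat τbar E τ k p q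
        = if p = (q.1, (⟨v, hvlt⟩ : Fin (τbar + 1))) then 1 else 0 := by
      rintro ⟨j, d⟩
      exact h1 j d
    rw [Finset.sum_congr rfl fun p _ => h1' p]
    rw [Finset.sum_ite_eq' Finset.univ (q.1, (⟨v, hvlt⟩ : Fin (τbar + 1))) (fun _ => (1:ℝ))]
    rw [if_pos (Finset.mem_univ _)]

lemma Amat_pos_ge (hnoself : ∀ k, ∀ e ∈ E k, e.1 ≠ e.2) (k : ℕ) {p q : Aug n τbar}
    (h : 0 < Amat τbar E τ k p q) : 1 / (n : ℝ) ≤ Amat τbar E τ k p q := by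
  have hn1 : 1 ≤ (n : ℝ) := by
    have : 0 < n := Fin.pos p.1
    exact_mod_cast this
  unfold Amat at h ⊢
  split_ifs at h ⊢ with h1 h2 h2
  · exact degW_ge (hnoself k) h
  · exact absurd h (lt_irrefl 0)
  · calc 1 / (n:ℝ) ≤ 1 / 1 := one_div_le_one_div_of_le one_pos hn1
       _ = 1 := by norm_num
  · exact absurd h (lt_irrefl 0)

lemma Wmat_nonneg (k m : ℕ) (p q : Aug n τbar) : 0 ≤ Wmat τbar E τ k m p q := by
  induction m generalizing p q with
  | zero =>
      rw [Wmat, Matrix.one_apply]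
      split_ifs <;> norm_num
  | succ m ih =>
      rw [Wmat, Matrix.mul_apply]
      exact Finset.sum_nonneg fun b _ => mul_nonneg (Amat_nonneg τbar E τ _ _ _) (ih b q)

lemma Wmat_colsum (hnoself : ∀ k, ∀ e ∈ E k, e.1 ≠ e.2) (hτle : ∀ k j i, τ k j i ≤ τbar)
    (k m : ℕ) (q : Aug n τbar) : ∑ p, Wmat τbar E τ k m p q = 1 := by
  induction m generalizing q with
  | zero =>
      rw [Wmat]
      simp [Matrix.one_apply]
  | succ m ih =>
      have : ∀ p, Wmat τbar E τ k (m+1) p q = ∑ b, Amat τbar E τ (k+m) p b * Wmat τbar E τ k m b q := by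
        intro p; rw [Wmat, Matrix.mul_apply]
      rw [Finset.sum_congr rfl fun p _ => this p]
      rw [Finset.sum_comm]
      have : ∀ b, (∑ p, Amat τbar E τ (k+m) p b * Wmat τbar E τ k m b q)
          = Wmat τbar E τ k m b q := by
        intro b
        rw [← Finset.sum_mul, Amat_colsum τbar E τ hnoself hτle, one_mul]
      rw [Finset.sum_congr rfl fun b _ => this b]
      exact ih q

lemma Wmat_compose (k m m' : ℕ) :
    Wmat τbar E τ k (m + m') = Wmat τbar E τ (k + m) m' * Wmat τbar E τ k m := by
  induction m' with
  | zero =>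
      show Wmat τbar E τ k (m + 0) = _
      rw [Nat.add_zero, Wmat, Matrix.one_mul]
  | succ m' ih =>
      have h1 : m + (m' + 1) = (m + m') + 1 := rfl
      rw [h1, Wmat, ih, Wmat, Matrix.mul_assoc, ← Nat.add_assoc]

lemma Wmat_pos_ge (hnoself : ∀ k, ∀ e ∈ E k, e.1 ≠ e.2) (k m : ℕ) {p q : Aug n τbar}
    (h : 0 < Wmat τbar E τ k m p q) : (1 / (n : ℝ)) ^ m ≤ Wmat τbar E τ k m p q := by
  induction m generalizing p q with
  | zero =>
      rw [Wmat, Matrix.one_apply] at h ⊢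
      split_ifs at h ⊢ with h1
      · norm_num
      · exact absurd h (lt_irrefl 0)
  | succ m ih =>
      rw [Wmat, Matrix.mul_apply] at h ⊢
      have h' : ∑ _b : Aug n τbar, (0:ℝ) < ∑ b, Amat τbar E τ (k+m) p b * Wmat τbar E τ k m b q := by
        simpa using h
      obtain ⟨b, _, hb⟩ := Finset.exists_lt_of_sum_lt h'
      have hAnn := Amat_nonneg τbar E τ (k+m) p b
      have hWnn := Wmat_nonneg τbar E τ k m b q
      have hA : 0 < Amat τbar E τ (k+m) p b := by
        rcases hAnn.lt_or_eq with h2 | h2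
        · exact h2
        · rw [← h2, zero_mul] at hb
          exact absurd hb (lt_irrefl 0)
      have hW : 0 < Wmat τbar E τ k m b q := by
        rcases hWnn.lt_or_eq with h2 | h2
        · exact h2
        · rw [← h2, mul_zero] at hb
          exact absurd hb (lt_irrefl 0)
      have h1n : (1/(n:ℝ)) ^ m ≤ Wmat τbar E τ k m b q := ih hW
      have h2n : 1/(n:ℝ) ≤ Amat τbar E τ (k+m) p b := Amat_pos_ge τbar E τ hnoself _ hA
      have hterm : (1/(n:ℝ))^(m+1) ≤ Amat τbar E τ (k+m) p b * Wmat τbar E τ k m b q := by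
        rw [pow_succ']
        exact mul_le_mul h2n h1n (by positivity) (le_of_lt hA)
      refine hterm.trans (Finset.single_le_sum
        (fun c _ => mul_nonneg (Amat_nonneg τbar E τ (k+m) p c) (Wmat_nonneg τbar E τ k m c q))
        (Finset.mem_univ b))

lemma Wmat_pos_compose {k m m' : ℕ} {p b q : Aug n τbar}
    (h1 : 0 < Wmat τbar E τ (k + m) m' p b) (h2 : 0 < Wmat τbar E τ k m b q) :
    0 < Wmat τbar E τ k (m + m') p q := by
  rw [Wmat_compose, Matrix.mul_apply]
  refine Finset.sum_pos' (fun c _ => mul_nonneg (Wmat_nonneg τbar E τ _ _ _ _) (Wmat_nonneg τbar E τ _ _ _ _)) ?_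
  exact ⟨b, Finset.mem_univ b, mul_pos h1 h2⟩

lemma Wmat_one (k : ℕ) : Wmat τbar E τ k 1 = Amat τbar E τ k := by
  show Amat τbar E τ (k + 0) * Wmat τbar E τ k 0 = _
  rw [Wmat, Matrix.mul_one, Nat.add_zero]

lemma Amat_diag_pos (hτself : ∀ k j, τ k j j = 0) (k : ℕ) (i : Fin n) :
    0 < Amat τbar E τ k (i, (0 : Fin (τbar+1))) (i, (0 : Fin (τbar+1))) := by
  unfold Amat
  have h0 : (((0 : Fin (τbar+1))) : ℕ) = 0 := rfl
  rw [if_pos h0, if_pos (by rw [hτself k i, h0])]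
  exact degW_diag_pos _ _

lemma Wmat_persist (hτself : ∀ k j, τ k j j = 0) {k m : ℕ} {i : Fin n} {q : Aug n τbar}
    (h : 0 < Wmat τbar E τ k m (i, (0 : Fin (τbar+1))) q) :
    0 < Wmat τbar E τ k (m + 1) (i, (0 : Fin (τbar+1))) q := by
  rw [Wmat, Matrix.mul_apply]
  refine Finset.sum_pos' (fun c _ => mul_nonneg (Amat_nonneg τbar E τ _ _ _) (Wmat_nonneg τbar E τ _ _ _ _)) ?_
  exact ⟨(i, 0), Finset.mem_univ _, mul_pos (Amat_diag_pos τbar E τ hτself _ i) h⟩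

lemma Wmat_persist_le (hτself : ∀ k j, τ k j j = 0) {k m m' : ℕ} (hm : m ≤ m') {i : Fin n}
    {q : Aug n τbar} (h : 0 < Wmat τbar E τ k m (i, (0 : Fin (τbar+1))) q) :
    0 < Wmat τbar E τ k m' (i, (0 : Fin (τbar+1))) q := by
  induction m' , hm using Nat.le_induction with
  | base => exact h
  | succ m' hm ih => exact Wmat_persist τbar E τ hτself ih

lemma Wmat_diag_pos (hτself : ∀ k j, τ k j j = 0) (k m : ℕ) (i : Fin n) :
    0 < Wmat τbar E τ k m (i, (0 : Fin (τbar+1))) (i, (0 : Fin (τbar+1))) := by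
  induction m with
  | zero =>
      rw [Wmat, Matrix.one_apply, if_pos rfl]
      norm_num
  | succ m ih => exact Wmat_persist τbar E τ hτself ih

lemma Wmat_drain (k : ℕ) (i : Fin n) (v : ℕ) (hv : v < τbar + 1) :
    0 < Wmat τbar E τ k v (i, (0 : Fin (τbar+1))) (i, ⟨v, hv⟩) := by
  induction v generalizing k with
  | zero =>
      rw [Wmat, Matrix.one_apply, if_pos (by rfl)]
      norm_num
  | succ v ih =>
      have hvlt : v < τbar + 1 := by omega
      have h2 : 0 < Wmat τbar E τ k 1 (i, (⟨v, hvlt⟩ : Fin (τbar+1))) (i, ⟨v+1, hv⟩) := by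
        rw [Wmat_one]
        unfold Amat
        rw [if_neg (by simp), if_pos ⟨rfl, rfl⟩]
        norm_num
      have h1 : 0 < Wmat τbar E τ (k + 1) v (i, (0 : Fin (τbar+1))) (i, ⟨v, hvlt⟩) := ih (k+1) hvlt
      have := Wmat_pos_compose τbar E τ h1 h2
      rwa [Nat.add_comm 1 v] at this

lemma Wmat_edge (hτle : ∀ k j i, τ k j i ≤ τbar) {s : ℕ} {l j : Fin n} (h : (l, j) ∈ E s) :
    0 < Wmat τbar E τ s (τ s l j + 1) (l, (0 : Fin (τbar+1))) (j, (0 : Fin (τbar+1))) := by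
  have hlt : τ s l j < τbar + 1 := Nat.lt_succ_of_le (hτle s l j)
  have h2 : 0 < Wmat τbar E τ s 1 (l, (⟨τ s l j, hlt⟩ : Fin (τbar+1))) (j, (0 : Fin (τbar+1))) := by
    rw [Wmat_one]
    unfold Amat
    rw [if_pos (by rfl), if_pos (by rfl)]
    exact degW_pos_of_mem h
  have h1 : 0 < Wmat τbar E τ (s + 1) (τ s l j) (l, (0 : Fin (τbar+1))) (l, ⟨τ s l j, hlt⟩) :=
    Wmat_drain τbar E τ (s+1) l _ hlt
  have := Wmat_pos_compose τbar E τ h1 h2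
  rwa [Nat.add_comm 1 (τ s l j)] at this

lemma exists_cross {F : Finset (Fin n × Fin n)} (hF : StronglyConnected F)
    {S : Finset (Fin n)} {a b : Fin n} (ha : a ∈ S) (hb : b ∉ S) :
    ∃ j ∈ S, ∃ l, l ∉ S ∧ (l, j) ∈ F := by
  have hab : a ≠ b := fun h => hb (h ▸ ha)
  have hpath := hF a b hab
  have claim : ∀ c : Fin n, Relation.TransGen (fun a b => (b, a) ∈ F) a c →
      c ∈ S ∨ ∃ j ∈ S, ∃ l, l ∉ S ∧ (l, j) ∈ F := by
    intro c hc
    induction hc with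
    | @single c h =>
        by_cases hcS : c ∈ S
        · exact Or.inl hcS
        · exact Or.inr ⟨a, ha, c, hcS, h⟩
    | @tail b' c hp h ih =>
        rcases ih with hbS | hcross
        · by_cases hcS : c ∈ S
          · exact Or.inl hcS
          · exact Or.inr ⟨b', hbS, c, hcS, h⟩
        · exact Or.inr hcross
  rcases claim b hpath with hbS | hcross
  · exact absurd hbS hb
  · exact hcross

section Infect

variable {t : ℕ → ℕ} {ℓ : ℕ}

lemma t_step (htmono : StrictMono t) (htℓ : ∀ m, t (m + 1) - t m ≤ ℓ) (m : ℕ) :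
    t (m + 1) ≤ t m + ℓ := by
  have h1 := htℓ m
  have h2 : t m ≤ t (m + 1) := le_of_lt (htmono (Nat.lt_succ_self m))
  omega

lemma t_add_le (htmono : StrictMono t) (htℓ : ∀ m, t (m + 1) - t m ≤ ℓ) (m c : ℕ) :
    t (m + c) ≤ t m + c * ℓ := by
  induction c with
  | zero => simp
  | succ c ih =>
      have := t_step htmono htℓ (m + c)
      have h2 : m + (c + 1) = (m + c) + 1 := rfl
      rw [h2]
      calc t ((m + c) + 1) ≤ t (m + c) + ℓ := t_step htmono htℓ (m + c)
        _ ≤ t m + c * ℓ + ℓ := by omega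
        _ = t m + (c + 1) * ℓ := by ring

lemma t_le_add (htmono : StrictMono t) (m c : ℕ) : t m + c ≤ t (m + c) := by
  induction c with
  | zero => simp
  | succ c ih =>
      have h1 : t (m + c) < t (m + c + 1) := htmono (Nat.lt_succ_self _)
      have h2 : m + (c + 1) = (m + c) + 1 := rfl
      rw [h2]
      omega

lemma infect (hnoself : ∀ k, ∀ e ∈ E k, e.1 ≠ e.2) (hℓ : 1 ≤ ℓ)
    (ht0 : t 0 = 0) (htmono : StrictMono t) (htℓ : ∀ m, t (m + 1) - t m ≤ ℓ)
    (hsc : ∀ m, StronglyConnected ((Finset.Ico (t m) (t (m + 1))).biUnion E))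
    (hτle : ∀ k j i, τ k j i ≤ τbar) (hτself : ∀ k j, τ k j j = 0)
    (k : ℕ) (i : Fin n) (j : Fin n) :
    0 < Wmat τbar E τ k (ℓ + (n - 1) * ((τbar + 1) * ℓ))
      (j, (0 : Fin (τbar+1))) (i, (0 : Fin (τbar+1))) := by
  classical
  have hex : ∃ m, k ≤ t m := ⟨k, htmono.le_apply⟩
  set m₀ := Nat.find hex with hm₀def
  have hm₀ : k ≤ t m₀ := Nat.find_spec hex
  have hm₀le : t m₀ ≤ k + ℓ := by
    rcases Nat.eq_zero_or_pos m₀ with h0 | h0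
    · rw [h0, ht0]
      omega
    · obtain ⟨m', hm'⟩ : ∃ m', m₀ = m' + 1 := ⟨m₀ - 1, by omega⟩
      have h2 : ¬ k ≤ t m' := Nat.find_min hex (by omega)
      have h3 : t (m' + 1) ≤ t m' + ℓ := t_step htmono htℓ m'
      have h4 : t m₀ = t (m' + 1) := by rw [hm']
      omega
  set S : ℕ → Finset (Fin n) := fun a => Finset.univ.filter
    (fun j => 0 < Wmat τbar E τ k (t (m₀ + a * (τbar + 1)) - k)
      (j, (0 : Fin (τbar+1))) (i, (0 : Fin (τbar+1)))) with hSdef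
  have hkle : ∀ a, k ≤ t (m₀ + a * (τbar + 1)) :=
    fun a => hm₀.trans (htmono.monotone (Nat.le_add_right _ _))
  have hiS : ∀ a, i ∈ S a := by
    intro a
    rw [hSdef]
    simp only [Finset.mem_filter, Finset.mem_univ, true_and]
    exact Wmat_diag_pos τbar E τ hτself k _ i
  have hSmono : ∀ a, S a ⊆ S (a + 1) := by
    intro a j'
    rw [hSdef]
    simp only [Finset.mem_filter, Finset.mem_univ, true_and]
    intro hj'
    refine Wmat_persist_le τbar E τ hτself ?_ hj'
    have := htmono.monotone (show m₀ + a * (τbar+1) ≤ m₀ + (a+1) * (τbar+1) by nlinarith)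
    omega
  have hgrow : ∀ a, S a ≠ Finset.univ → (S a).card < (S (a + 1)).card := by
    intro a hne
    obtain ⟨b, hb⟩ : ∃ b, b ∉ S a := by
      by_contra h
      push_neg at h
      exact hne (Finset.eq_univ_iff_forall.mpr h)
    obtain ⟨j', hj', l, hl, hlF⟩ := exists_cross (hsc (m₀ + a * (τbar+1))) (hiS a) hb
    obtain ⟨s, hs, hsE⟩ := Finset.mem_biUnion.mp hlF
    rw [Finset.mem_Ico] at hs
    set m := m₀ + a * (τbar + 1) with hmdef
    have hkts : k ≤ s := (hkle a).trans hs.1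
    -- j' is positive at time t m, persist to s
    have hj'pos : 0 < Wmat τbar E τ k (t m - k) (j', (0 : Fin (τbar+1))) (i, (0 : Fin (τbar+1))) := by
      have := hj'
      rw [hSdef] at this
      simpa using this
    have hj's : 0 < Wmat τbar E τ k (s - k) (j', (0 : Fin (τbar+1))) (i, (0 : Fin (τbar+1))) :=
      Wmat_persist_le τbar E τ hτself (by omega) hj'pos
    have hedge := Wmat_edge τbar E τ hτle hsE
    have hcomp : 0 < Wmat τbar E τ k ((s - k) + (τ s l j' + 1))
        (l, (0 : Fin (τbar+1))) (i, (0 : Fin (τbar+1))) := by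
      refine Wmat_pos_compose τbar E τ ?_ hj's
      have hks : k + (s - k) = s := by omega
      rw [hks]
      exact hedge
    have hlS : l ∈ S (a + 1) := by
      rw [hSdef]
      simp only [Finset.mem_filter, Finset.mem_univ, true_and]
      refine Wmat_persist_le τbar E τ hτself ?_ hcomp
      have hτb := hτle s l j'
      have hgr : t (m + 1) + τbar ≤ t ((m + 1) + τbar) := t_le_add htmono (m+1) τbar
      have hidx : (m + 1) + τbar = m₀ + (a + 1) * (τbar + 1) := by
        rw [hmdef]; ring
      rw [hidx] at hgr
      omega
    have hsub : insert l (S a) ⊆ S (a + 1) := by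
      intro x hx
      rcases Finset.mem_insert.mp hx with rfl | hx
      · exact hlS
      · exact hSmono a hx
    calc (S a).card < (insert l (S a)).card := by
          rw [Finset.card_insert_of_notMem hl]
          omega
      _ ≤ (S (a + 1)).card := Finset.card_le_card hsub
  have hcard : ∀ a, S a = Finset.univ ∨ a + 1 ≤ (S a).card := by
    intro a
    induction a with
    | zero =>
        right
        exact Finset.card_pos.mpr ⟨i, hiS 0⟩
    | succ a ih =>
        by_cases hu : S a = Finset.univ
        · left
          exact Finset.eq_univ_iff_forall.mpr fun x => hSmono a (hu ▸ Finset.mem_univ x)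
        · rcases ih with hu' | hle
          · exact absurd hu' hu
          · right
            have := hgrow a hu
            omega
  have hfin : S (n - 1) = Finset.univ := by
    rcases hcard (n - 1) with hu | hle
    · exact hu
    · apply Finset.eq_univ_of_card
      have h1 : (S (n-1)).card ≤ n := by
        simpa using Finset.card_le_univ (S (n-1))
      have h2 : 1 ≤ n := Fin.pos i
      simp only [Fintype.card_fin]
      omega
  have hjS : j ∈ S (n - 1) := hfin ▸ Finset.mem_univ j
  have hjpos : 0 < Wmat τbar E τ k (t (m₀ + (n-1) * (τbar + 1)) - k)
      (j, (0 : Fin (τbar+1))) (i, (0 : Fin (τbar+1))) := by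
    rw [hSdef] at hjS
    simpa using hjS
  refine Wmat_persist_le τbar E τ hτself ?_ hjpos
  have hadd := t_add_le htmono htℓ m₀ ((n-1) * (τbar + 1))
  have hassoc : (n - 1) * (τbar + 1) * ℓ = (n - 1) * ((τbar + 1) * ℓ) := mul_assoc _ _ _
  omega

lemma rows_pos (hnoself : ∀ k, ∀ e ∈ E k, e.1 ≠ e.2) (hℓ : 1 ≤ ℓ)
    (ht0 : t 0 = 0) (htmono : StrictMono t) (htℓ : ∀ m, t (m + 1) - t m ≤ ℓ)
    (hsc : ∀ m, StronglyConnected ((Finset.Ico (t m) (t (m + 1))).biUnion E))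
    (hτle : ∀ k j i, τ k j i ≤ τbar) (hτself : ∀ k j, τ k j j = 0)
    (k : ℕ) (j : Fin n) (q : Aug n τbar) :
    0 < Wmat τbar E τ k (τbar + (ℓ + (n - 1) * ((τbar + 1) * ℓ)))
      (j, (0 : Fin (τbar+1))) q := by
  obtain ⟨i, e⟩ := q
  have h1 : 0 < Wmat τbar E τ k (e : ℕ) (i, (0 : Fin (τbar+1))) (i, e) := by
    have := Wmat_drain τbar E τ k i e.val e.isLt
    simpa using this
  have h2 : 0 < Wmat τbar E τ k τbar (i, (0 : Fin (τbar+1))) (i, e) :=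
    Wmat_persist_le τbar E τ hτself (by omega) h1
  have h3 := infect τbar E τ hnoself hℓ ht0 htmono htℓ hsc hτle hτself (k + τbar) i j
  exact Wmat_pos_compose τbar E τ h3 h2

end Infect

section Analysis

variable {ι : Type*} [Fintype ι]

lemma mulVec_apply' (M : Matrix ι ι ℝ) (v : ι → ℝ) (p : ι) :
    (M *ᵥ v) p = ∑ q, M p q * v q := rfl

lemma sum_mulVec (M : Matrix ι ι ℝ) (hcol : ∀ q, ∑ p, M p q = 1) (v : ι → ℝ) :
    ∑ p, (M *ᵥ v) p = ∑ q, v q := by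
  simp only [mulVec_apply']
  rw [Finset.sum_comm]
  refine Finset.sum_congr rfl fun q _ => ?_
  rw [← Finset.sum_mul, hcol q, one_mul]

lemma l1_nonexp (M : Matrix ι ι ℝ) (hM : ∀ p q, 0 ≤ M p q) (hcol : ∀ q, ∑ p, M p q = 1)
    (v : ι → ℝ) : ∑ p, |(M *ᵥ v) p| ≤ ∑ q, |v q| := by
  calc ∑ p, |(M *ᵥ v) p| ≤ ∑ p, ∑ q, M p q * |v q| := by
        refine Finset.sum_le_sum fun p _ => ?_
        rw [mulVec_apply']
        refine (Finset.abs_sum_le_sum_abs _ _).trans ?_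
        refine Finset.sum_le_sum fun q _ => ?_
        rw [abs_mul, abs_of_nonneg (hM p q)]
    _ = ∑ q, |v q| := by
        rw [Finset.sum_comm]
        refine Finset.sum_congr rfl fun q _ => ?_
        rw [← Finset.sum_mul, hcol q, one_mul]

lemma l1_contract (M : Matrix ι ι ℝ) (hM : ∀ p q, 0 ≤ M p q) (hcol : ∀ q, ∑ p, M p q = 1)
    (r : ι) (δ : ℝ) (hδ : 0 ≤ δ) (hrow : ∀ q, δ ≤ M r q) (v : ι → ℝ) (hv : ∑ q, v q = 0) :
    ∑ p, |(M *ᵥ v) p| ≤ (1 - δ) * ∑ q, |v q| := by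
  classical
  set vp : ι → ℝ := fun q => max (v q) 0 with hvpdef
  set vm : ι → ℝ := fun q => max (-v q) 0 with hvmdef
  have hvpn : ∀ q, 0 ≤ vp q := fun q => le_max_right _ _
  have hvmn : ∀ q, 0 ≤ vm q := fun q => le_max_right _ _
  have hvpm : ∀ q, vp q - vm q = v q := by
    intro q
    rcases le_total 0 (v q) with h | h
    · rw [show vp q = v q from max_eq_left h,
        show vm q = 0 from max_eq_right (by linarith)]
      ring
    · rw [show vp q = 0 from max_eq_right h,
        show vm q = -v q from max_eq_left (by linarith)]
      ring
  have habs : ∀ q, |v q| = vp q + vm q := by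
    intro q
    rcases le_total 0 (v q) with h | h
    · rw [abs_of_nonneg h, show vp q = v q from max_eq_left h,
        show vm q = 0 from max_eq_right (by linarith)]
      ring
    · rw [abs_of_nonpos h, show vp q = 0 from max_eq_right h,
        show vm q = -v q from max_eq_left (by linarith)]
      ring
  set S : ℝ := ∑ q, vp q with hSdef
  have hSnn : 0 ≤ S := Finset.sum_nonneg fun q _ => hvpn q
  have hSm : ∑ q, vm q = S := by
    have h1 : ∑ q, (vp q - vm q) = ∑ q, v q := Finset.sum_congr rfl fun q _ => by rw [hvpm]
    rw [Finset.sum_sub_distrib, hv] at h1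
    linarith [h1]
  have hsplit : ∀ p, (M *ᵥ v) p = (M *ᵥ vp) p - (M *ᵥ vm) p := by
    intro p
    simp only [mulVec_apply']
    rw [← Finset.sum_sub_distrib]
    refine Finset.sum_congr rfl fun q _ => ?_
    rw [← hvpm q]
    ring
  have hann : ∀ p, 0 ≤ (M *ᵥ vp) p := fun p =>
    Finset.sum_nonneg fun q _ => mul_nonneg (hM p q) (hvpn q)
  have hbnn : ∀ p, 0 ≤ (M *ᵥ vm) p := fun p =>
    Finset.sum_nonneg fun q _ => mul_nonneg (hM p q) (hvmn q)
  have hsa : ∑ p, (M *ᵥ vp) p = S := by rw [sum_mulVec M hcol]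
  have hsb : ∑ p, (M *ᵥ vm) p = S := by rw [sum_mulVec M hcol, hSm]
  have har : δ * S ≤ (M *ᵥ vp) r := by
    rw [mulVec_apply', hSdef, Finset.mul_sum]
    exact Finset.sum_le_sum fun q _ => mul_le_mul_of_nonneg_right (hrow q) (hvpn q)
  have hbr : δ * S ≤ (M *ᵥ vm) r := by
    rw [mulVec_apply', ← hSm, Finset.mul_sum]
    exact Finset.sum_le_sum fun q _ => mul_le_mul_of_nonneg_right (hrow q) (hvmn q)
  have hpoint : ∀ p, |(M *ᵥ v) p| =
      (M *ᵥ vp) p + (M *ᵥ vm) p - 2 * min ((M *ᵥ vp) p) ((M *ᵥ vm) p) := by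
    intro p
    rw [hsplit p]
    have h1 := max_sub_min_eq_abs ((M *ᵥ vp) p) ((M *ᵥ vm) p)
    have h2 := max_add_min ((M *ᵥ vp) p) ((M *ᵥ vm) p)
    have h3 := abs_sub_comm ((M *ᵥ vm) p) ((M *ᵥ vp) p)
    linarith
  have hminsum : min ((M *ᵥ vp) r) ((M *ᵥ vm) r)
      ≤ ∑ p, min ((M *ᵥ vp) p) ((M *ᵥ vm) p) :=
    Finset.single_le_sum (fun p _ => le_min (hann p) (hbnn p)) (Finset.mem_univ r)
  have habs_sum : ∑ q, |v q| = 2 * S := by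
    rw [Finset.sum_congr rfl fun q _ => habs q, Finset.sum_add_distrib, hSm]
    ring
  calc ∑ p, |(M *ᵥ v) p|
      = ∑ p, ((M *ᵥ vp) p + (M *ᵥ vm) p - 2 * min ((M *ᵥ vp) p) ((M *ᵥ vm) p)) :=
        Finset.sum_congr rfl fun p _ => hpoint p
    _ = 2 * S - 2 * ∑ p, min ((M *ᵥ vp) p) ((M *ᵥ vm) p) := by
        rw [Finset.sum_sub_distrib, Finset.sum_add_distrib, hsa, hsb, ← Finset.mul_sum]
        ring
    _ ≤ 2 * S - 2 * min ((M *ᵥ vp) r) ((M *ᵥ vm) r) := by linarith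
    _ ≤ 2 * S - 2 * (δ * S) := by
        have := le_min har hbr
        linarith
    _ = (1 - δ) * (2 * S) := by ring
    _ = (1 - δ) * ∑ q, |v q| := by rw [habs_sum]

end Analysis

lemma Xaug_sum0 (x : ℕ → Fin n → ℝ) :
    ∑ p, Xaug τbar E τ x 0 p = ∑ j, x 0 j := by
  rw [Fintype.sum_prod_type]
  refine Finset.sum_congr rfl fun j _ => ?_
  rw [Fin.sum_univ_succ]
  have h1 : Xaug τbar E τ x 0 (j, 0) = x 0 j := if_pos rfl
  have h2 : ∀ e : Fin τbar, Xaug τbar E τ x 0 (j, e.succ) = 0 := by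
    intro e
    unfold Xaug Buf
    rw [if_neg (by simp [Fin.val_succ])]
    simp
  rw [h1, Finset.sum_congr rfl fun e _ => h2 e]
  simp

lemma Xaug_sum_const (hnoself : ∀ k, ∀ e ∈ E k, e.1 ≠ e.2) (hτle : ∀ k j i, τ k j i ≤ τbar)
    (x : ℕ → Fin n → ℝ) (hx : DelayedIterTV (fun k => degWeights (E k)) τ x) (k : ℕ) :
    ∑ p, Xaug τbar E τ x k p = ∑ j, x 0 j := by
  induction k with
  | zero => exact Xaug_sum0 τbar E τ x
  | succ k ih =>
      rw [Xaug_step τbar E τ hτle x hx k,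
        sum_mulVec _ (Amat_colsum τbar E τ hnoself hτle k), ih]

lemma Xaug_nonneg (x : ℕ → Fin n → ℝ) (hx : ∀ k j, 0 ≤ x k j) (k : ℕ) (p : Aug n τbar) :
    0 ≤ Xaug τbar E τ x k p := by
  unfold Xaug
  split_ifs
  · exact hx k p.1
  · refine Finset.sum_nonneg fun i _ => Finset.sum_nonneg fun s _ => ?_
    split_ifs
    · exact mul_nonneg (degW_nonneg _ _ _) (hx s i)
    · exact le_refl 0

end PS

end Hidden

open Hidden Hidden.PS Hidden.PS0

theorem statement6 (n : ℕ) (hn : 2 ≤ n)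
    (E : ℕ → Finset (Fin n × Fin n))
    (hnoself : ∀ k, ∀ e ∈ E k, e.1 ≠ e.2)
    (ℓ : ℕ) (hℓ : 1 ≤ ℓ)
    (t : ℕ → ℕ) (ht0 : t 0 = 0) (htmono : StrictMono t)
    (htℓ : ∀ m, t (m + 1) - t m ≤ ℓ)
    (hsc : ∀ m, StronglyConnected ((Finset.Ico (t m) (t (m + 1))).biUnion E))
    (τbar : ℕ) (τ : ℕ → Fin n → Fin n → ℕ)
    (hτle : ∀ k j i, τ k j i ≤ τbar)
    (hτself : ∀ k j, τ k j j = 0)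
    (y z : ℕ → Fin n → ℝ) (y0 : Fin n → ℝ)
    (hy0 : y 0 = y0) (hz0 : ∀ j, z 0 j = 1)
    (hy : DelayedIterTV (fun k => degWeights (E k)) τ y)
    (hz : DelayedIterTV (fun k => degWeights (E k)) τ z) :
    (∀ k j, 0 < z k j) ∧
      ∀ j, Tendsto (fun k => y k j / z k j) atTop (nhds ((∑ l, y0 l) / (n : ℝ))) := by
  classical
  -- positivity of z
  have hzpos : ∀ k j, 0 < z k j := by
    intro k
    induction k using Nat.strong_induction_on with
    | _ k ih =>
      intro j
      cases k with
      | zero =>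
          rw [hz0 j]
          norm_num
      | succ k =>
          rw [hz k j]
          apply Finset.sum_pos'
          · intro i _
            refine Finset.sum_nonneg fun s hs => ?_
            split_ifs
            · exact mul_nonneg (degW_nonneg _ _ _)
                (le_of_lt (ih s (Finset.mem_range.mp hs) i))
            · exact le_refl 0
          · refine ⟨j, Finset.mem_univ j, ?_⟩
            apply Finset.sum_pos'
            · intro s hs
              split_ifs
              · exact mul_nonneg (degW_nonneg _ _ _)
                  (le_of_lt (ih s (Finset.mem_range.mp hs) j))
              · exact le_refl 0
            · refine ⟨k, Finset.self_mem_range_succ k, ?_⟩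
              rw [if_pos (by simp [hτself k j])]
              exact mul_pos (degW_diag_pos _ _) (ih k (Nat.lt_succ_self k) j)
  refine ⟨hzpos, ?_⟩
  -- constants
  set B : ℕ := τbar + (ℓ + (n - 1) * ((τbar + 1) * ℓ)) with hBdef
  have hBpos : 0 < B := by omega
  set δ : ℝ := (1 / (n : ℝ)) ^ B with hδdef
  have hnR : (2 : ℝ) ≤ (n : ℝ) := by exact_mod_cast hn
  have hδpos : 0 < δ := by
    rw [hδdef]
    positivity
  have hδle : δ ≤ 1 := by
    rw [hδdef]
    apply pow_le_one₀
    · positivity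
    · rw [div_le_one (by linarith)]
      linarith
  have hrow : ∀ (k : ℕ) (j : Fin n) (q : Aug n τbar),
      δ ≤ Wmat τbar E τ k B (j, (0 : Fin (τbar + 1))) q := by
    intro k j q
    exact Wmat_pos_ge τbar E τ hnoself k B
      (rows_pos τbar E τ hnoself hℓ ht0 htmono htℓ hsc hτle hτself k j q)
  set c : ℝ := (∑ l, y0 l) / (n : ℝ) with hcdef
  set u : ℕ → Fin n → ℝ := fun k j => y k j - c * z k j with hudef
  have hu : DelayedIterTV (fun k => degWeights (E k)) τ u := by
    intro k j
    show y (k + 1) j - c * z (k + 1) j = _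
    rw [hy k j, hz k j, Finset.mul_sum, ← Finset.sum_sub_distrib]
    refine Finset.sum_congr rfl fun i _ => ?_
    rw [Finset.mul_sum, ← Finset.sum_sub_distrib]
    refine Finset.sum_congr rfl fun s _ => ?_
    split_ifs
    · show _ = degWeights (E s) j i * (y s i - c * z s i)
      ring
    · ring
  -- sum invariants
  have hSz : ∀ k, ∑ p, Xaug τbar E τ z k p = (n : ℝ) := by
    intro k
    rw [Xaug_sum_const τbar E τ hnoself hτle z hz k]
    simp [hz0]
  have hSu : ∀ k, ∑ p, Xaug τbar E τ u k p = 0 := by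
    intro k
    rw [Xaug_sum_const τbar E τ hnoself hτle u hu k]
    have : ∀ j : Fin n, u 0 j = y0 j - c := by
      intro j
      rw [hudef]
      show y 0 j - c * z 0 j = _
      rw [hy0, hz0 j, mul_one]
    rw [Finset.sum_congr rfl fun j _ => this j, Finset.sum_sub_distrib]
    simp only [Finset.sum_const, Finset.card_univ, Fintype.card_fin, nsmul_eq_mul]
    rw [hcdef]
    field_simp
    ring
  have hXznn : ∀ k p, 0 ≤ Xaug τbar E τ z k p :=
    Xaug_nonneg τbar E τ z (fun k j => le_of_lt (hzpos k j))
  -- the ℓ¹ norm of the augmented error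
  set N : ℕ → ℝ := fun k => ∑ p, |Xaug τbar E τ u k p| with hNdef
  have hNnn : ∀ k, 0 ≤ N k := fun k => Finset.sum_nonneg fun p _ => abs_nonneg _
  have hNdec : ∀ k, N (k + 1) ≤ N k := by
    intro k
    rw [hNdef]
    simp only []
    rw [Xaug_step τbar E τ hτle u hu k]
    exact l1_nonexp _ (Amat_nonneg τbar E τ k) (Amat_colsum τbar E τ hnoself hτle k) _
  have hNmono : ∀ a b : ℕ, a ≤ b → N b ≤ N a := by
    intro a b hab
    induction b, hab using Nat.le_induction with
    | base => exact le_refl _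
    | succ b hab ih => exact (hNdec b).trans ih
  have hNcon : ∀ k, N (k + B) ≤ (1 - δ) * N k := by
    intro k
    rw [hNdef]
    simp only []
    rw [Xaug_iter τbar E τ hτle u hu k B]
    exact l1_contract _ (Wmat_nonneg τbar E τ k B) (Wmat_colsum τbar E τ hnoself hτle k B)
      (⟨0, by omega⟩, (0 : Fin (τbar + 1))) δ (le_of_lt hδpos) (hrow k _) _ (hSu k)
  have hNgeo : ∀ m, N (m * B) ≤ (1 - δ) ^ m * N 0 := by
    intro m
    induction m with
    | zero => simp
    | succ m ih =>
        have h1 : (m + 1) * B = m * B + B := by ring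
        rw [h1]
        calc N (m * B + B) ≤ (1 - δ) * N (m * B) := hNcon (m * B)
          _ ≤ (1 - δ) * ((1 - δ) ^ m * N 0) := by
              apply mul_le_mul_of_nonneg_left ih
              linarith
          _ = (1 - δ) ^ (m + 1) * N 0 := by ring
  have hNlim : Tendsto N atTop (nhds 0) := by
    have hbd : ∀ k, N k ≤ (1 - δ) ^ (k / B) * N 0 := by
      intro k
      exact (hNmono _ _ (Nat.div_mul_le_self k B)).trans (hNgeo (k / B))
    have h1 : Tendsto (fun m : ℕ => (1 - δ) ^ m) atTop (nhds 0) :=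
      tendsto_pow_atTop_nhds_zero_of_lt_one (by linarith) (by linarith)
    have h2 : Tendsto (fun k : ℕ => k / B) atTop atTop := by
      refine Filter.tendsto_atTop_atTop.mpr fun b => ⟨b * B, fun a ha => ?_⟩
      exact (Nat.le_div_iff_mul_le hBpos).mpr ha
    have h3 : Tendsto (fun k : ℕ => (1 - δ) ^ (k / B) * N 0) atTop (nhds 0) := by
      have := (h1.comp h2).mul_const (N 0)
      simpa using this
    exact squeeze_zero hNnn hbd h3
  -- lower bound on z
  have hzlb : ∀ k j, k ≥ B → δ * n ≤ z k j := by
    intro k j hk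
    obtain ⟨k', rfl⟩ : ∃ k', k = k' + B := ⟨k - B, by omega⟩
    have hstep : Xaug τbar E τ z (k' + B) = Wmat τbar E τ k' B *ᵥ Xaug τbar E τ z k' :=
      Xaug_iter τbar E τ hτle z hz k' B
    have h1 : z (k' + B) j = (Wmat τbar E τ k' B *ᵥ Xaug τbar E τ z k') (j, (0 : Fin (τbar + 1))) := by
      rw [← hstep]
      exact (if_pos rfl).symm
    rw [h1, mulVec_apply']
    calc δ * (n : ℝ) = ∑ q, δ * Xaug τbar E τ z k' q := by
          rw [← Finset.mul_sum, hSz k']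
      _ ≤ ∑ q, Wmat τbar E τ k' B (j, (0 : Fin (τbar + 1))) q * Xaug τbar E τ z k' q :=
          Finset.sum_le_sum fun q _ => mul_le_mul_of_nonneg_right (hrow k' j q) (hXznn k' q)
  -- conclusion
  intro j
  have hulim : Tendsto (fun k => y k j / z k j - c) atTop (nhds 0) := by
    apply squeeze_zero_norm' (a := fun k => N k / (δ * n))
    · rw [Filter.eventually_atTop]
      refine ⟨B, fun k hk => ?_⟩
      have hzk := hzpos k j
      have hzlbk := hzlb k j hk
      have heq : y k j / z k j - c = u k j / z k j := by
        rw [hudef]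
        field_simp
      rw [heq, Real.norm_eq_abs, abs_div, abs_of_pos hzk]
      have hu1 : |u k j| ≤ N k := by
        have : u k j = Xaug τbar E τ u k (j, (0 : Fin (τbar + 1))) := (if_pos rfl).symm
        rw [this, hNdef]
        exact Finset.single_le_sum (f := fun p => |Xaug τbar E τ u k p|)
          (fun p _ => abs_nonneg _) (Finset.mem_univ _)
      apply div_le_div₀ (hNnn k) hu1 (by positivity) hzlbk
    · have := hNlim.div_const (δ * (n : ℝ))
      simpa using this
  have := hulim.add_const c
  simp only [sub_add_cancel, zero_add] at this
  exact this
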